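/- Let G be a group acting by isometries on a metric space X, with word metric |·| on G from a finite generating set S. If for every ε > 0 there exists x ∈ X with d(s·x, x) ≤ ε for all s ∈ S, then for every x ∈ X, d(g·x, x)/|g| → 0 as |g| → ∞. -/

import Mathlib

open Filter

/-- Word length of `g` with respect to a generating set `S`. -/
noncomputable def wordLength {G : Type*} [Group G] (S : Set G) (g : G) : ℕ :=
  sInf {n | ∃ l : List G, (∀ s ∈ l, s ∈ S) ∧ l.prod = g ∧ l.length = n}

private lemma listBound {G X : Type*} [Group G] [MetricSpace X] [MulAction G X]
    (hiso : ∀ g : G, Isometry (fun x : X => g • x)) (y : X) (c : ℝ) :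
    ∀ l : List G, (∀ s ∈ l, dist (s • y) y ≤ c) →
      dist (l.prod • y) y ≤ l.length * c := by
  intro l
  induction l with
  | nil => simp
  | cons a t ih =>
    intro h
    have h1 : dist ((a :: t).prod • y) y ≤ dist (a • (t.prod • y)) (a • y) + dist (a • y) y := by
      rw [List.prod_cons, mul_smul]
      exact dist_triangle _ _ _
    have h2 : dist (a • (t.prod • y)) (a • y) = dist (t.prod • y) y := (hiso a).dist_eq _ _
    have h3 := ih (fun s hs => h s (List.mem_cons_of_mem _ hs))
    have h4 := h a (List.mem_cons_self)
    rw [List.length_cons]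
    push_cast
    linarith [h1, h2.le]

/-- If an isometric action of a finitely generated group has almost fixed points,
then its orbits are sublinear. -/
theorem stmt0 {G X : Type*} [Group G] [MetricSpace X] [MulAction G X]
    (hiso : ∀ g : G, Isometry (fun x : X => g • x))
    (S : Finset G) (hgen : Subgroup.closure (S : Set G) = ⊤)
    (hsymm : ∀ s ∈ S, s⁻¹ ∈ S)
    (haf : ∀ ε : ℝ, 0 < ε → ∃ x : X, ∀ s ∈ S, dist (s • x) x ≤ ε) :
    ∀ x : X, ∀ ε : ℝ, 0 < ε → ∃ N : ℕ, ∀ g : G,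
      N ≤ wordLength (S : Set G) g →
      dist (g • x) x / (wordLength (S : Set G) g : ℝ) ≤ ε := by
  intro x ε hε
  obtain ⟨y, hy⟩ := haf (ε / 2) (by linarith)
  set D : ℝ := dist x y with hD
  have hD0 : 0 ≤ D := dist_nonneg
  refine ⟨max 1 (⌈4 * D / ε⌉₊ + 1), ?_⟩
  intro g hg
  -- the word length set is nonempty
  have hgmem : g ∈ Subgroup.closure (S : Set G) := hgen ▸ Subgroup.mem_top g
  have hgmem' : g ∈ Submonoid.closure ((S : Set G) ∪ (S : Set G)⁻¹) := by
    rw [← Subgroup.closure_toSubmonoid]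
    exact hgmem
  obtain ⟨l0, hl0, hprod0⟩ := Submonoid.exists_list_of_mem_closure hgmem'
  have hl0' : ∀ s ∈ l0, s ∈ (S : Set G) := by
    intro s hs
    rcases hl0 s hs with h | h
    · exact h
    · have : s⁻¹ ∈ S := h
      simpa using hsymm _ this
  have hne : {n | ∃ l : List G, (∀ s ∈ l, s ∈ (S : Set G)) ∧ l.prod = g ∧ l.length = n}.Nonempty :=
    ⟨l0.length, l0, hl0', hprod0, rfl⟩
  obtain ⟨l, hl, hprod, hlen⟩ := Nat.sInf_mem hne
  set n : ℕ := wordLength (S : Set G) g with hn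
  have hN1 : 1 ≤ n := le_trans (le_max_left _ _) hg
  have hNc : (⌈4 * D / ε⌉₊ + 1 : ℕ) ≤ n := le_trans (le_max_right _ _) hg
  have hnpos : (0 : ℝ) < (n : ℝ) := by exact_mod_cast hN1
  -- bound on orbit displacement of y
  have hby : dist (g • y) y ≤ (n : ℝ) * (ε / 2) := by
    have := listBound hiso y (ε / 2) l (fun s hs => hy s (hl s hs))
    rw [hprod, hlen] at this
    exact this
  -- main distance bound
  have hbx : dist (g • x) x ≤ 2 * D + (n : ℝ) * (ε / 2) := by
    have t1 : dist (g • x) x ≤ dist (g • x) (g • y) + dist (g • y) y + dist y x :=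
      dist_triangle4 _ _ _ _
    have t2 : dist (g • x) (g • y) = D := (hiso g).dist_eq x y
    have t3 : dist y x = D := dist_comm y x
    linarith
  -- numeric bound on n
  have hceil : 4 * D / ε ≤ (n : ℝ) := by
    have h1 : 4 * D / ε ≤ (⌈4 * D / ε⌉₊ : ℝ) := Nat.le_ceil _
    have h2 : ((⌈4 * D / ε⌉₊ : ℕ) : ℝ) ≤ (n : ℝ) := by
      exact_mod_cast le_trans (Nat.le_succ _) hNc
    linarith
  have h4D : 4 * D ≤ (n : ℝ) * ε := by
    rw [div_le_iff₀ hε] at hceil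
    linarith
  rw [div_le_iff₀ hnpos]
  linarith
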